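/- Assumptions and notation as in the Section 3 construction: (W,S) is an irreducible Coxeter system of finite rank with m_{st} < ∞ for all s,t ∈ S, whose Coxeter graph G = (S,E) contains at least two circuits; T = (S,E_0) is a spanning tree of G and {s_1,t_1}, {s_2,t_2} ∈ E ∖ E_0 are two distinct edges; V is the resulting representation of W. For s ∈ S let V_-^s := {v ∈ V : s·v = −v}; then V_-^s = ⊕_{n∈ℤ} ℂ α_{s,n}. For every edge {s,t} ∈ E, the map f_{st} : V_-^s → V_-^t defined by f_{st}(v) := (t·v − v)/(2cos(π/m_{st})) is a well-defined linear isomorphism of vector spaces, and for every v ∈ V_-^s the vector f_{st}(v) lies in the W-subrepresentation of V generated by v. -/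

import Mathlib

open Finsupp in
/-- The Section 3 operators: for each `s ∈ S`, a linear operator on
`V = ⊕_{n ∈ ℤ, t ∈ S} ℂ α_{t,n}`, where `α_{t,n}` is the standard basis vector
`Finsupp.single (t, n) 1`.  Here `M` is the Coxeter matrix (all of whose entries are assumed
finite), and `{s₁,t₁}`, `{s₂,t₂}` are the two chosen edges of the Coxeter graph outside of the
spanning tree.  The defining formulas are:
(i) `s·α_{s,n} = −α_{s,n}`;
(ii) `s₁·α_{t₁,n} = α_{t₁,n} + 2cos(π/m_{s₁t₁}) α_{s₁,n+1}`,
     `t₁·α_{s₁,n+1} = α_{s₁,n+1} + 2cos(π/m_{s₁t₁}) α_{t₁,n}`,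
     `s₂·α_{t₂,n} = α_{t₂,n} + 2^{n+1}cos(π/m_{s₂t₂}) α_{s₂,n+1}`,
     `t₂·α_{s₂,n+1} = α_{s₂,n+1} + 2^{−n+1}cos(π/m_{s₂t₂}) α_{t₂,n}`;
(iii) otherwise, for `s ≠ t`, `s·α_{t,n} = α_{t,n} + 2cos(π/m_{st}) α_{s,n}`
      (which is `α_{t,n}` when `m_{st} = 2` since `cos(π/2) = 0`). -/
noncomputable def sec3Act {B : Type*} [DecidableEq B] (M : CoxeterMatrix B)
    (s₁ t₁ s₂ t₂ : B) (s : B) : ((B × ℤ) →₀ ℂ) →ₗ[ℂ] ((B × ℤ) →₀ ℂ) :=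
  Finsupp.lift _ ℂ _ fun p =>
    if s = p.1 then -single p 1
    else if s = s₁ ∧ p.1 = t₁ then
      single p 1 + (2 * Real.cos (Real.pi / (M s₁ t₁ : ℝ)) : ℂ) • single (s₁, p.2 + 1) 1
    else if s = t₁ ∧ p.1 = s₁ then
      single p 1 + (2 * Real.cos (Real.pi / (M s₁ t₁ : ℝ)) : ℂ) • single (t₁, p.2 - 1) 1
    else if s = s₂ ∧ p.1 = t₂ then
      single p 1 + ((2 : ℂ) ^ (p.2 + 1) * (Real.cos (Real.pi / (M s₂ t₂ : ℝ)) : ℂ)) •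
        single (s₂, p.2 + 1) 1
    else if s = t₂ ∧ p.1 = s₂ then
      single p 1 + ((2 : ℂ) ^ (2 - p.2) * (Real.cos (Real.pi / (M s₂ t₂ : ℝ)) : ℂ)) •
        single (t₂, p.2 - 1) 1
    else
      single p 1 + (2 * Real.cos (Real.pi / (M s p.1 : ℝ)) : ℂ) • single (s, p.2) 1

/-- The Coxeter graph of a Coxeter matrix `M`. -/
def coxeterGraph {B : Type*} (M : CoxeterMatrix B) : SimpleGraph B where
  Adj s t := s ≠ t ∧ M s t ≠ 2
  symm := by
    constructor
    intro s t h
    exact ⟨h.1.symm, by rw [M.symmetric]; exact h.2⟩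
  loopless := by constructor; intro s h; exact h.1 rfl

/-- The subspace of vectors fixed by all the operators `σ s`. -/
def fixedSubmodule {B V : Type*} [AddCommGroup V] [Module ℂ V]
    (σ : B → V →ₗ[ℂ] V) : Submodule ℂ V where
  carrier := {v | ∀ s, σ s v = v}
  add_mem' := by
    intro a b ha hb s
    simp [map_add, ha s, hb s]
  zero_mem' := by intro s; simp
  smul_mem' := by
    intro c a ha s
    simp [map_smul, ha s]

open Finsupp

section Sec3Helpers
variable {B : Type*} [DecidableEq B] {M : CoxeterMatrix B} {s₁ t₁ s₂ t₂ : B}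

lemma sec3Act_single (s : B) (p : B × ℤ) (c : ℂ) :
    sec3Act M s₁ t₁ s₂ t₂ s (single p c) = c •
    ( if s = p.1 then -single p (1:ℂ)
      else if s = s₁ ∧ p.1 = t₁ then
        single p 1 + (2 * Real.cos (Real.pi / (M s₁ t₁ : ℝ)) : ℂ) • single (s₁, p.2 + 1) 1
      else if s = t₁ ∧ p.1 = s₁ then
        single p 1 + (2 * Real.cos (Real.pi / (M s₁ t₁ : ℝ)) : ℂ) • single (t₁, p.2 - 1) 1
      else if s = s₂ ∧ p.1 = t₂ then
        single p 1 + ((2 : ℂ) ^ (p.2 + 1) * (Real.cos (Real.pi / (M s₂ t₂ : ℝ)) : ℂ)) •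
          single (s₂, p.2 + 1) 1
      else if s = t₂ ∧ p.1 = s₂ then
        single p 1 + ((2 : ℂ) ^ (2 - p.2) * (Real.cos (Real.pi / (M s₂ t₂ : ℝ)) : ℂ)) •
          single (t₂, p.2 - 1) 1
      else
        single p 1 + (2 * Real.cos (Real.pi / (M s p.1 : ℝ)) : ℂ) • single (s, p.2) 1 ) := by
  rw [sec3Act, Finsupp.lift_apply, Finsupp.sum_single_index]
  simp

/-- Evaluation at coordinates off the acting generator's row is unchanged. -/
lemma sec3Act_apply_ne (s : B) (v : (B × ℤ) →₀ ℂ) (p : B × ℤ) (hp : p.1 ≠ s) :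
    (sec3Act M s₁ t₁ s₂ t₂ s v) p = v p := by
  induction v using Finsupp.induction_linear with
  | zero => simp
  | add f g hf hg => simp [map_add, hf, hg]
  | single a b =>
    rw [sec3Act_single]
    rcases a with ⟨a1, n⟩
    split_ifs with h1 h2 h3 h4 h5 <;>
      simp_all [Finsupp.single_apply, Prod.ext_iff] <;>
      first
        | (intro h1' _; exact absurd h1'.symm hp)
        | (rw [if_neg (fun hc => hp (hc.1.symm))]; simp)

lemma sec3Act_single_diag (s : B) (n : ℤ) (c : ℂ) :
    sec3Act M s₁ t₁ s₂ t₂ s (single (s, n) c) = -single (s, n) c := by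
  rw [sec3Act_single, if_pos rfl]
  simp

/-- Part 1: the (-1)-eigenspace of `σ s` is the span of the `α_{s,n}`. -/
lemma eig (s : B) :
    {v : (B × ℤ) →₀ ℂ | sec3Act M s₁ t₁ s₂ t₂ s v = -v} =
      ↑(Finsupp.supported ℂ ℂ {p : B × ℤ | p.1 = s}) := by
  ext v
  simp only [Set.mem_setOf_eq, SetLike.mem_coe]
  constructor
  · intro hv
    rw [Finsupp.mem_supported']
    intro p hp
    have h1 := sec3Act_apply_ne (M := M) (s₁ := s₁) (t₁ := t₁) (s₂ := s₂) (t₂ := t₂) s v p hp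
    rw [hv] at h1
    simp only [Finsupp.neg_apply] at h1
    linear_combination -h1 / 2
  · intro hv
    rw [Finsupp.supported_eq_span_single] at hv
    refine Submodule.span_induction
      (p := fun v _ => sec3Act M s₁ t₁ s₂ t₂ s v = -v) ?_ ?_ ?_ ?_ hv
    · rintro x ⟨⟨p1, pn⟩, hp, rfl⟩
      obtain rfl : p1 = s := hp
      exact sec3Act_single_diag p1 pn 1
    · simp
    · intro x y _ _ hx hy; rw [map_add, hx, hy]; abel
    · intro c x _ hx; rw [map_smul, hx, smul_neg]

lemma two_cos_ne_zero {m : ℕ} (h3 : 3 ≤ m) :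
    (2 * Real.cos (Real.pi / (m : ℝ)) : ℂ) ≠ 0 := by
  have hm : (3:ℝ) ≤ (m:ℝ) := by exact_mod_cast h3
  have hpi := Real.pi_pos
  have h0 : (0:ℝ) < Real.cos (Real.pi / m) := by
    apply Real.cos_pos_of_mem_Ioo
    constructor
    · have : (0:ℝ) < Real.pi / m := div_pos hpi (by linarith)
      linarith
    · rw [div_lt_div_iff₀ (by linarith) (by norm_num)]
      nlinarith
  exact_mod_cast Complex.ofReal_ne_zero.mpr (by positivity)

lemma edge_basis {s t : B} (hst : s ≠ t) :
    ∃ (φ : ℤ ≃ ℤ) (d : ℤ → ℂ), (∀ n, d n ≠ 0) ∧ ∀ n : ℤ,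
      sec3Act M s₁ t₁ s₂ t₂ t (single (s, n) (1:ℂ)) =
        single (s, n) 1 +
        ((2 * Real.cos (Real.pi / (M s t : ℝ)) : ℂ) * d n) • single (t, φ n) 1 := by
  have hts : ¬ t = (s, (0:ℤ)).1 := fun h => hst (h.symm)
  by_cases h2 : t = s₁ ∧ s = t₁
  · refine ⟨Equiv.addRight 1, fun _ => 1, fun _ => one_ne_zero, fun n => ?_⟩
    rw [sec3Act_single, if_neg (fun h => hst h.symm), if_pos ⟨h2.1, h2.2⟩]
    obtain ⟨rfl, rfl⟩ := h2
    rw [M.symmetric]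
    simp
  · by_cases h3 : t = t₁ ∧ s = s₁
    · refine ⟨Equiv.subRight 1, fun _ => 1, fun _ => one_ne_zero, fun n => ?_⟩
      rw [sec3Act_single, if_neg (fun h => hst h.symm), if_neg h2, if_pos ⟨h3.1, h3.2⟩]
      obtain ⟨rfl, rfl⟩ := h3
      rw [M.symmetric]
      simp [Equiv.subRight]
    · by_cases h4 : t = s₂ ∧ s = t₂
      · refine ⟨Equiv.addRight 1, fun n => 2 ^ n, fun n => zpow_ne_zero n two_ne_zero,
          fun n => ?_⟩
        rw [sec3Act_single, if_neg (fun h => hst h.symm), if_neg h2, if_neg h3,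
          if_pos ⟨h4.1, h4.2⟩]
        obtain ⟨rfl, rfl⟩ := h4
        rw [M.symmetric]
        rw [one_smul]
        simp only [Equiv.coe_addRight]
        rw [zpow_add_one₀ (two_ne_zero)]
        congr 1
        ring
      · by_cases h5 : t = t₂ ∧ s = s₂
        · refine ⟨Equiv.subRight 1, fun n => 2 ^ (1 - n),
            fun n => zpow_ne_zero _ two_ne_zero, fun n => ?_⟩
          rw [sec3Act_single, if_neg (fun h => hst h.symm), if_neg h2, if_neg h3, if_neg h4,
            if_pos ⟨h5.1, h5.2⟩]
          obtain ⟨rfl, rfl⟩ := h5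
          rw [M.symmetric]
          rw [one_smul]
          simp only [Equiv.subRight_apply]
          congr 1
          have : (2:ℤ) - n = (1 - n) + 1 := by ring
          rw [this, zpow_add_one₀ (two_ne_zero)]
          ring
        · refine ⟨Equiv.refl ℤ, fun _ => 1, fun _ => one_ne_zero, fun n => ?_⟩
          rw [sec3Act_single, if_neg (fun h => hst h.symm), if_neg h2, if_neg h3, if_neg h4,
            if_neg h5]
          rw [M.symmetric]
          simp

end Sec3Helpers

/-- under the Section 3 assumptions, with `V = (B × ℤ) →₀ ℂ` the resulting
representation `ρ` of `W`: for `s ∈ S`, the `(−1)`-eigenspace `V₋ˢ = {v : s·v = −v}` equals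
`⊕_{n ∈ ℤ} ℂ α_{s,n}` (the subspace of finsupps supported on `{s} × ℤ`); and for every edge
`{s,t}` of the Coxeter graph, the linear map `f_{st} := v ↦ (t·v − v)/(2cos(π/m_{st}))`
maps `V₋ˢ` into `V₋ᵗ`, is a linear isomorphism from `V₋ˢ` onto `V₋ᵗ`, and sends each
`v ∈ V₋ˢ` into the `W`-subrepresentation of `V` generated by `v`. -/
theorem statement13 {B W : Type*} [Group W] [Fintype B] [DecidableEq B]
    (M : CoxeterMatrix B) (cs : CoxeterSystem M W)
    (hfin : ∀ s t : B, M s t ≠ 0)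
    (hconn : (coxeterGraph M).Connected)
    (G₀ : SimpleGraph B) (hsub : G₀ ≤ coxeterGraph M) (htree : G₀.IsTree)
    (s₁ t₁ s₂ t₂ : B)
    (he₁ : (coxeterGraph M).Adj s₁ t₁) (hne₁ : ¬ G₀.Adj s₁ t₁)
    (he₂ : (coxeterGraph M).Adj s₂ t₂) (hne₂ : ¬ G₀.Adj s₂ t₂)
    (hdist : Sym2.mk (s₁, t₁) ≠ Sym2.mk (s₂, t₂))
    (ρ : Representation ℂ W ((B × ℤ) →₀ ℂ))
    (hρ : ∀ s : B, ρ (cs.simple s) = sec3Act M s₁ t₁ s₂ t₂ s) :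
    (∀ s : B, {v : (B × ℤ) →₀ ℂ | sec3Act M s₁ t₁ s₂ t₂ s v = -v} =
      ↑(Finsupp.supported ℂ ℂ {p : B × ℤ | p.1 = s})) ∧
    ∀ s t : B, (coxeterGraph M).Adj s t →
      ∀ f : ((B × ℤ) →₀ ℂ) →ₗ[ℂ] ((B × ℤ) →₀ ℂ),
        f = ((2 * Real.cos (Real.pi / (M s t : ℝ)) : ℂ))⁻¹ •
              (sec3Act M s₁ t₁ s₂ t₂ t - LinearMap.id) →
        (∀ v, sec3Act M s₁ t₁ s₂ t₂ s v = -v → sec3Act M s₁ t₁ s₂ t₂ t (f v) = -(f v)) ∧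
        (∀ v, sec3Act M s₁ t₁ s₂ t₂ s v = -v → f v = 0 → v = 0) ∧
        (∀ u, sec3Act M s₁ t₁ s₂ t₂ t u = -u →
          ∃ v, sec3Act M s₁ t₁ s₂ t₂ s v = -v ∧ f v = u) ∧
        (∀ v, sec3Act M s₁ t₁ s₂ t₂ s v = -v →
          f v ∈ Submodule.span ℂ {u | ∃ w : W, ρ w v = u}) := by
  have heig : ∀ (s : B) (v : (B × ℤ) →₀ ℂ),
      sec3Act M s₁ t₁ s₂ t₂ s v = -v ↔ v ∈ Finsupp.supported ℂ ℂ {p : B × ℤ | p.1 = s} :=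
    fun s v => Set.ext_iff.mp (eig s) v
  refine ⟨fun s => eig s, fun s t hadj f hf => ?_⟩
  have hadj2 : s ≠ t ∧ M s t ≠ 2 := hadj
  obtain ⟨hst, hM2⟩ := hadj2
  -- `m ≥ 3` and the nonvanishing of the cosine coefficient
  have h3 : 3 ≤ M s t := by
    have h0 := hfin s t
    have h1 := M.off_diagonal s t hst
    omega
  set c : ℂ := (2 * Real.cos (Real.pi / (M s t : ℝ)) : ℂ) with hc_def
  have hc : c ≠ 0 := two_cos_ne_zero h3
  obtain ⟨φ, d, hd, hbasis⟩ := edge_basis (M := M) (s₁ := s₁) (t₁ := t₁) (s₂ := s₂)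
    (t₂ := t₂) hst
  -- action of `f` on basis vectors
  have hfs : ∀ n : ℤ, f (single (s, n) 1) = d n • single (t, φ n) 1 := by
    intro n
    rw [hf]
    simp only [LinearMap.smul_apply, LinearMap.sub_apply, LinearMap.id_apply]
    rw [hbasis n, ← hc_def]
    rw [add_sub_cancel_left, smul_smul]
    congr 1
    field_simp
  -- the inverse map
  set T' : ((B × ℤ) →₀ ℂ) →ₗ[ℂ] ((B × ℤ) →₀ ℂ) :=
    Finsupp.lift _ ℂ _ (fun p => (d (φ.symm p.2))⁻¹ • single (s, φ.symm p.2) (1:ℂ)) with hT'def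
  have hT's : ∀ (q : B × ℤ) (a : ℂ),
      T' (single q a) = a • (d (φ.symm q.2))⁻¹ • single (s, φ.symm q.2) 1 := by
    intro q a
    rw [hT'def, Finsupp.lift_apply, Finsupp.sum_single_index]
    simp
  have hT'mem : ∀ u, T' u ∈ Finsupp.supported ℂ ℂ {p : B × ℤ | p.1 = s} := by
    intro u
    induction u using Finsupp.induction_linear with
    | zero => simp
    | add a b ha hb => rw [map_add]; exact Submodule.add_mem _ ha hb
    | single q a =>
      rw [hT's]
      exact Submodule.smul_mem _ _ (Submodule.smul_mem _ _
        (Finsupp.single_mem_supported ℂ 1 rfl))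
  have hfmem : ∀ v ∈ Finsupp.supported ℂ ℂ {p : B × ℤ | p.1 = s},
      f v ∈ Finsupp.supported ℂ ℂ {p : B × ℤ | p.1 = t} := by
    intro v hv
    rw [Finsupp.supported_eq_span_single] at hv
    refine Submodule.span_induction
      (p := fun v _ => f v ∈ Finsupp.supported ℂ ℂ {p : B × ℤ | p.1 = t}) ?_ ?_ ?_ ?_ hv
    · rintro x ⟨⟨p1, pn⟩, hp, rfl⟩
      have hp' : p1 = s := hp
      subst hp'
      rw [hfs]
      exact Submodule.smul_mem _ _ (Finsupp.single_mem_supported ℂ 1 rfl)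
    · simp
    · intro x y _ _ hx hy; rw [map_add]; exact Submodule.add_mem _ hx hy
    · intro a x _ hx; rw [map_smul]; exact Submodule.smul_mem _ _ hx
  have hT'f : ∀ v ∈ Finsupp.supported ℂ ℂ {p : B × ℤ | p.1 = s}, T' (f v) = v := by
    intro v hv
    rw [Finsupp.supported_eq_span_single] at hv
    refine Submodule.span_induction
      (p := fun v _ => T' (f v) = v) ?_ ?_ ?_ ?_ hv
    · rintro x ⟨⟨p1, pn⟩, hp, rfl⟩
      have hp' : p1 = s := hp
      subst hp'
      rw [hfs, map_smul, hT's]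
      simp only [Equiv.symm_apply_apply, smul_smul]
      rw [one_mul, mul_inv_cancel₀ (hd pn), one_smul]
    · simp
    · intro x y _ _ hx hy; rw [map_add, map_add, hx, hy]
    · intro a x _ hx; rw [map_smul, map_smul, hx]
  have hfT' : ∀ u ∈ Finsupp.supported ℂ ℂ {p : B × ℤ | p.1 = t}, f (T' u) = u := by
    intro u hu
    rw [Finsupp.supported_eq_span_single] at hu
    refine Submodule.span_induction
      (p := fun u _ => f (T' u) = u) ?_ ?_ ?_ ?_ hu
    · rintro x ⟨⟨p1, pn⟩, hp, rfl⟩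
      have hp' : p1 = t := hp
      subst hp'
      rw [hT's, one_smul, map_smul, hfs]
      simp only [Equiv.apply_symm_apply, smul_smul]
      rw [inv_mul_cancel₀ (hd _), one_smul]
    · simp
    · intro x y _ _ hx hy; rw [map_add, map_add, hx, hy]
    · intro a x _ hx; rw [map_smul, map_smul, hx]
  refine ⟨?_, ?_, ?_, ?_⟩
  · intro v hv
    rw [heig] at hv ⊢
    exact hfmem v hv
  · intro v hv hfv
    rw [heig] at hv
    rw [← hT'f v hv, hfv, map_zero]
  · intro u hu
    rw [heig] at hu
    refine ⟨T' u, ?_, hfT' u hu⟩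
    rw [heig]
    exact hT'mem u
  · intro v hv
    have h1 : f v = c⁻¹ • (sec3Act M s₁ t₁ s₂ t₂ t v) - c⁻¹ • v := by
      rw [hf]
      simp only [LinearMap.smul_apply, LinearMap.sub_apply, LinearMap.id_apply, smul_sub,
        ← hc_def]
    rw [h1]
    refine Submodule.sub_mem _ ?_ ?_
    · refine Submodule.smul_mem _ _ (Submodule.subset_span ⟨cs.simple t, ?_⟩)
      rw [hρ t]
    · exact Submodule.smul_mem _ _ (Submodule.subset_span ⟨1, by simp⟩)
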